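/- Let x be the quadratic lattice x(z) = z² and ν ∈ ℝ. Suppose ρ_ν satisfies the adjoint Pearson-type equation ∇(σ·ρ_ν)(z) + τ_ν(z)·ρ_ν(z)·∇x_{ν+1}(z) = 0 for all z ∈ ℂ. Then ρ_ν(z+1)·σ(−z−1−ν) = ρ_ν(z)·σ(z) for all z ∈ ℂ; equivalently, ρ_ν(z+1)/ρ_ν(z) = σ(z)/σ(−z−1−ν) wherever the denominators are nonzero. (Lemma 5.2) -/
import Mathlib


noncomputable section

open Finset

/-- `x` is a non-uniform lattice of one of the two classes (q-quadratic with
`q = e^w`, or quadratic), together with its associated functions `α = a` and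
`γ = g`. -/
def IsNonUniformLattice (w : ℂ) (x : ℂ → ℂ) (a g : ℝ → ℂ) : Prop :=
  (Complex.exp w ≠ 1 ∧
    ∃ c1 c2 c3 : ℂ, c1 * c2 ≠ 0 ∧
      (∀ s : ℂ, x s = c1 * Complex.exp (s * w) + c2 * Complex.exp (-(s * w)) + c3) ∧
      (∀ μ : ℝ, a μ =
        (Complex.exp ((μ : ℂ) / 2 * w) + Complex.exp (-((μ : ℂ) / 2 * w))) / 2) ∧
      (∀ μ : ℝ, g μ =
        (Complex.exp ((μ : ℂ) / 2 * w) - Complex.exp (-((μ : ℂ) / 2 * w))) /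
          (Complex.exp ((1 : ℂ) / 2 * w) - Complex.exp (-((1 : ℂ) / 2 * w))))) ∨
  (∃ c1 c2 c3 : ℂ, c1 ≠ 0 ∧
    (∀ s : ℂ, x s = c1 * s ^ 2 + c2 * s + c3) ∧
    (∀ μ : ℝ, a μ = 1) ∧ (∀ μ : ℝ, g μ = (μ : ℂ)))

/-- `xl x ν s = x_ν(s) = x (s + ν/2)`. -/
def xl (x : ℂ → ℂ) (ν : ℝ) (s : ℂ) : ℂ := x (s + (ν : ℂ) / 2)

/-- `σ(z) = σ̃(x z) - (1/2)·τ̃(x z)·∇x₁(z)`. -/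
def sig (x : ℂ → ℂ) (st tt : Polynomial ℂ) (z : ℂ) : ℂ :=
  st.eval (x z) - (1 / 2) * tt.eval (x z) * (xl x 1 z - xl x 1 (z - 1))

/-- `κ_ν = α(ν-1)·τ̃' + (1/2)·γ(ν-1)·σ̃''`. -/
def kap (a g : ℝ → ℂ) (st tt : Polynomial ℂ) (ν : ℝ) : ℂ :=
  a (ν - 1) * tt.coeff 1 + (1 / 2) * g (ν - 1) * (2 * st.coeff 2)

/-- Backward difference quotient `∇_ν f (z) = ∇f(z)/∇x_ν(z)`. -/
def nab (x : ℂ → ℂ) (ν : ℝ) (f : ℂ → ℂ) (z : ℂ) : ℂ :=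
  (f z - f (z - 1)) / (xl x ν z - xl x ν (z - 1))

/-- Forward difference quotient `Δ_ν f (z) = Δf(z)/Δx_ν(z)`. -/
def del (x : ℂ → ℂ) (ν : ℝ) (f : ℂ → ℂ) (z : ℂ) : ℂ :=
  (f (z + 1) - f z) / (xl x ν (z + 1) - xl x ν z)

/-- Generalized power `[x_α(s) - x_α(z)]^{(m)} = ∏_{k=0}^{m-1} (x_α(s) - x_α(z-k))`. -/
def gp (x : ℂ → ℂ) (m : ℕ) (al : ℝ) (s z : ℂ) : ℂ :=
  ∏ k ∈ Finset.range m, (xl x al s - xl x al (z - (k : ℂ)))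

/-- The defining relation for the family `τ_ν = T ν`:
`τ_ν(z)·∇x_{ν+1}(z) = σ(z+ν) - σ(z) + τ(z+ν)·∇x₁(z+ν)`. -/
def TauFamily (x : ℂ → ℂ) (st tt : Polynomial ℂ) (T : ℝ → ℂ → ℂ) : Prop :=
  ∀ (ν : ℝ) (z : ℂ),
    T ν z * (xl x (ν + 1) z - xl x (ν + 1) (z - 1)) =
      sig x st tt (z + (ν : ℂ)) - sig x st tt z +
        tt.eval (x (z + (ν : ℂ))) * (xl x 1 (z + (ν : ℂ)) - xl x 1 (z + (ν : ℂ) - 1))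

/-- Lemma 5.2 (quadratic lattice `x(z) = z²`). -/
theorem lem5_2
    (x : ℂ → ℂ) (hx : ∀ z : ℂ, x z = z ^ 2)
    (st tt : Polynomial ℂ) (hst : st.degree ≤ 2) (htt : tt.degree ≤ 1)
    (T : ℝ → ℂ → ℂ) (hT : TauFamily x st tt T)
    (ν : ℝ) (ρ : ℂ → ℂ)
    (hρ : ∀ z : ℂ, (sig x st tt z * ρ z - sig x st tt (z - 1) * ρ (z - 1)) +
      T ν z * ρ z * (xl x (ν + 1) z - xl x (ν + 1) (z - 1)) = 0) :
    ∀ z : ℂ, ρ (z + 1) * sig x st tt (-z - 1 - (ν : ℂ)) = ρ z * sig x st tt z := by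
  intro z
  have key : ∀ w : ℂ, sig x st tt (-w) =
      sig x st tt w + tt.eval (x w) * (xl x 1 w - xl x 1 (w - 1)) := by
    intro w
    simp only [sig, xl, hx, neg_sq, Complex.ofReal_one]
    ring
  have key' := key (z + 1 + (ν : ℂ))
  rw [show -(z + 1 + (ν : ℂ)) = -z - 1 - (ν : ℂ) by ring] at key'
  have h1 := hρ (z + 1)
  have h2 := hT ν (z + 1)
  simp only [add_sub_cancel_right] at h1 h2
  have h2' : T ν (z + 1) * (xl x (ν + 1) (z + 1) - xl x (ν + 1) z) =
      sig x st tt (-z - 1 - (ν : ℂ)) - sig x st tt (z + 1) := by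
    linear_combination h2 - key'
  linear_combination h1 - ρ (z + 1) * h2'
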